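/- arXiv:2408.00304 — 3 statements merged into one kernel-verified Lean document; each statement's English description precedes it below -/
import Mathlib

section
/- Let V be a real inner product space with inner product ⟪·,·⟫ and norm ‖·‖, and let 𝒜 : V × V → ℝ be a bilinear form with 𝒜(v, v) ≥ 0 for all v ∈ V; write N(v) := √(𝒜(v, v)). Assume the continuity bound |𝒜(x, y)| ≤ C̄ · N(x) · N(y) for all x, y ∈ V with a constant C̄ > 0, and let H > 0, c_# > 0. Suppose e, z, z̃ ∈ V satisfy: (i) ‖e‖² = 𝒜(z, e); (ii) 𝒜(z̃, e) = 0; (iii) 𝒜(z̃, z − z̃) = 0; (iv) 𝒜(z, z − z̃) = ⟪e, z − z̃⟫; (v) ‖z − z̃‖ ≤ H · c_# · N(z − z̃). Then ‖e‖ ≤ C̄ · H · c_# · N(e). -/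
open scoped RealInnerProductSpace

/-- Abstract Aubin–Nitsche duality argument (Lemma 4.2): under the listed identities for
the error `e`, the dual solution `z` and its Galerkin approximation `zt`, one has
`‖e‖ ≤ C̄ · H · c_# · ‖e‖_𝒜`. -/
theorem aubin_nitsche_duality {V : Type*} [NormedAddCommGroup V] [InnerProductSpace ℝ V]
    (A : V →ₗ[ℝ] V →ₗ[ℝ] ℝ) (hA : ∀ v : V, 0 ≤ A v v)
    (C H c : ℝ) (hC : 0 < C) (hH : 0 < H) (hc : 0 < c)
    (hcont : ∀ x y : V, |A x y| ≤ C * Real.sqrt (A x x) * Real.sqrt (A y y))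
    (e z zt : V)
    (h1 : ‖e‖ ^ 2 = A z e)
    (h2 : A zt e = 0)
    (h3 : A zt (z - zt) = 0)
    (h4 : A z (z - zt) = ⟪e, z - zt⟫)
    (h5 : ‖z - zt‖ ≤ H * c * Real.sqrt (A (z - zt) (z - zt))) :
    ‖e‖ ≤ C * H * c * Real.sqrt (A e e) := by
  set s := Real.sqrt (A (z - zt) (z - zt)) with hs
  set n := Real.sqrt (A e e) with hn
  have hs0 : 0 ≤ s := Real.sqrt_nonneg _
  have hn0 : 0 ≤ n := Real.sqrt_nonneg _
  -- A (z - zt) e = A z e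
  have hAsub : A (z - zt) e = A z e := by
    simp [map_sub, h2]
  -- ‖e‖^2 ≤ C * s * n
  have key1 : ‖e‖ ^ 2 ≤ C * s * n := by
    calc ‖e‖ ^ 2 = A (z - zt) e := by rw [h1, hAsub]
      _ ≤ |A (z - zt) e| := le_abs_self _
      _ ≤ C * s * n := hcont _ _
  -- s^2 = ⟪e, z - zt⟫
  have hsq : s ^ 2 = ⟪e, z - zt⟫ := by
    rw [hs, Real.sq_sqrt (hA _)]
    have : A (z - zt) (z - zt) = A z (z - zt) - A zt (z - zt) := by
      simp [map_sub]; ring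
    rw [this, h3, h4, sub_zero]
  -- s ≤ ‖e‖ * (H * c)
  have hsle : s ≤ ‖e‖ * (H * c) := by
    rcases eq_or_lt_of_le hs0 with h | h
    · nlinarith [mul_pos hH hc, norm_nonneg e]
    · have h6 : s ^ 2 ≤ ‖e‖ * (H * c * s) := by
        calc s ^ 2 = ⟪e, z - zt⟫ := hsq
          _ ≤ ‖e‖ * ‖z - zt‖ := real_inner_le_norm _ _
          _ ≤ ‖e‖ * (H * c * s) := by
              exact mul_le_mul_of_nonneg_left h5 (norm_nonneg e)
      nlinarith
  rcases eq_or_lt_of_le (norm_nonneg e) with h | h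
  · rw [← h]
    positivity
  · nlinarith [mul_le_mul_of_nonneg_left hsle (mul_nonneg hC.le hn0)]
end

section
/- Let H be a real Hilbert space with inner product ⟪·,·⟫ and norm ‖·‖, let 𝒜 : H × H → ℝ be a continuous bilinear form with 𝒜(w, w) ≥ 0 for all w ∈ H, and let |·|_B be a continuous seminorm on H such that |𝒜(x, y)| ≤ C̄ · √(𝒜(x,x)) · |y|_B for all x, y ∈ H, with constant C̄ ≥ 1. Let W ⊆ H be a linear subspace, T > 0, and let u, u_ms, v : [0,T] → H be continuously differentiable curves such that for every t ∈ [0,T]: (i) ⟪(u − u_ms)'(t), w⟫ + 𝒜((u − u_ms)(t), w) = 0 for all w ∈ W (Galerkin orthogonality), and (ii) (u_ms − v)(t) ∈ W. Write e := u − u_ms. Then ‖e(T)‖² + ∫₀ᵀ 𝒜(e(t), e(t)) dt ≤ 4‖e(0)‖² + 4‖(u − v)(0)‖² + 4C̄² ( ‖(u − v)(T)‖² + ∫₀ᵀ |(u − v)(t)|_B² dt ) + 4 ( ∫₀ᵀ ‖(u − v)'(t)‖² dt )^{1/2} ( ∫₀ᵀ ‖e(t)‖² dt )^{1/2}. -/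
open MeasureTheory
open scoped RealInnerProductSpace

/-- Cauchy–Schwarz inequality for interval integrals of continuous functions. -/
lemma cs_integral {T : ℝ} (hT : 0 ≤ T) {f g : ℝ → ℝ}
    (hf : ContinuousOn f (Set.Icc 0 T)) (hg : ContinuousOn g (Set.Icc 0 T)) :
    ∫ t in (0:ℝ)..T, f t * g t ≤
      Real.sqrt (∫ t in (0:ℝ)..T, (f t)^2) * Real.sqrt (∫ t in (0:ℝ)..T, (g t)^2) := by
  have intf2 : IntervalIntegrable (fun t => (f t)^2) volume 0 T :=
    (hf.pow 2).intervalIntegrable_of_Icc hT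
  have intg2 : IntervalIntegrable (fun t => (g t)^2) volume 0 T :=
    (hg.pow 2).intervalIntegrable_of_Icc hT
  have intfg : IntervalIntegrable (fun t => f t * g t) volume 0 T :=
    (hf.mul hg).intervalIntegrable_of_Icc hT
  set Af := ∫ t in (0:ℝ)..T, (f t)^2 with hAf
  set Bg := ∫ t in (0:ℝ)..T, (g t)^2 with hBg
  set I := ∫ t in (0:ℝ)..T, f t * g t with hI
  have hAnn : 0 ≤ Af := intervalIntegral.integral_nonneg hT (fun t _ => sq_nonneg _)
  have hQ : ∀ lam : ℝ, 0 ≤ Bg * (lam * lam) + (-2 * I) * lam + Af := by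
    intro lam
    have h0 : 0 ≤ ∫ t in (0:ℝ)..T, (f t - lam * g t)^2 :=
      intervalIntegral.integral_nonneg hT (fun t _ => sq_nonneg _)
    have hexp : ∫ t in (0:ℝ)..T, (f t - lam * g t)^2
        = Af - (2*lam) * I + lam^2 * Bg := by
      have heq : ∀ t, (f t - lam * g t)^2
          = ((f t)^2 - (2*lam) * (f t * g t)) + lam^2 * (g t)^2 := by
        intro t; ring
      rw [intervalIntegral.integral_congr (fun t _ => heq t),
        intervalIntegral.integral_add (intf2.sub (intfg.const_mul _))
          (intg2.const_mul _),
        intervalIntegral.integral_sub intf2 (intfg.const_mul _),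
        intervalIntegral.integral_const_mul, intervalIntegral.integral_const_mul]
    nlinarith [h0, hexp]
  have hdisc : discrim Bg (-2 * I) Af ≤ 0 := discrim_le_zero hQ
  rw [discrim] at hdisc
  have hI2 : I^2 ≤ Af * Bg := by nlinarith
  calc I ≤ |I| := le_abs_self _
    _ = Real.sqrt (I^2) := (Real.sqrt_sq_eq_abs I).symm
    _ ≤ Real.sqrt (Af * Bg) := Real.sqrt_le_sqrt hI2
    _ = Real.sqrt Af * Real.sqrt Bg := Real.sqrt_mul hAnn _

set_option maxHeartbeats 1000000 in
/-- Abstract version: quasi-optimality for the error curve `e` with comparison error `η`. -/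
lemma parabolic_quasi_optimality_aux {H : Type*} [NormedAddCommGroup H]
    [InnerProductSpace ℝ H]
    (A : H →L[ℝ] H →L[ℝ] ℝ) (hA : ∀ w : H, 0 ≤ A w w)
    (p : Seminorm ℝ H) (hp : Continuous fun x => p x)
    (C : ℝ) (hC : 1 ≤ C)
    (hcont : ∀ x y : H, |A x y| ≤ C * Real.sqrt (A x x) * p y)
    (T : ℝ) (hT : 0 < T)
    (e η e' η' : ℝ → H)
    (he : ∀ t ∈ Set.Icc (0:ℝ) T, HasDerivAt e (e' t) t)
    (hη : ∀ t ∈ Set.Icc (0:ℝ) T, HasDerivAt η (η' t) t)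
    (he' : ContinuousOn e' (Set.Icc 0 T))
    (hη' : ContinuousOn η' (Set.Icc 0 T))
    (hgal : ∀ t ∈ Set.Icc (0:ℝ) T,
      ⟪e' t, e t⟫ + A (e t) (e t) = ⟪e' t, η t⟫ + A (e t) (η t)) :
    ‖e T‖ ^ 2 + ∫ t in (0:ℝ)..T, A (e t) (e t) ≤
      4 * ‖e 0‖ ^ 2 + 4 * ‖η 0‖ ^ 2 +
        4 * C ^ 2 * (‖η T‖ ^ 2 + ∫ t in (0:ℝ)..T, (p (η t)) ^ 2) +
        4 * Real.sqrt (∫ t in (0:ℝ)..T, ‖η' t‖ ^ 2) *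
          Real.sqrt (∫ t in (0:ℝ)..T, ‖e t‖ ^ 2) := by
  have hT0 : (0:ℝ) ≤ T := hT.le
  have hTmem : T ∈ Set.Icc (0:ℝ) T := Set.right_mem_Icc.2 hT0
  have h0mem : (0:ℝ) ∈ Set.Icc (0:ℝ) T := Set.left_mem_Icc.2 hT0
  have huIcc : Set.uIcc (0:ℝ) T = Set.Icc 0 T := Set.uIcc_of_le hT0
  -- continuity of the curves
  have hec : ContinuousOn e (Set.Icc 0 T) :=
    fun t ht => ((he t ht).continuousAt).continuousWithinAt
  have hηc : ContinuousOn η (Set.Icc 0 T) :=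
    fun t ht => ((hη t ht).continuousAt).continuousWithinAt
  -- continuity of the integrands
  have hac : ContinuousOn (fun t => A (e t) (e t)) (Set.Icc 0 T) :=
    (A.continuous.comp_continuousOn hec).clm_apply hec
  have haηc : ContinuousOn (fun t => A (e t) (η t)) (Set.Icc 0 T) :=
    (A.continuous.comp_continuousOn hec).clm_apply hηc
  have hbc : ContinuousOn (fun t => (p (η t))^2) (Set.Icc 0 T) :=
    (hp.comp_continuousOn hηc).pow 2
  have hinnc : ContinuousOn (fun t => ⟪e t, η' t⟫) (Set.Icc 0 T) := hec.inner hη'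
  -- integrabilities
  have inta : IntervalIntegrable (fun t => A (e t) (e t)) volume 0 T :=
    hac.intervalIntegrable_of_Icc hT0
  have intaη : IntervalIntegrable (fun t => A (e t) (η t)) volume 0 T :=
    haηc.intervalIntegrable_of_Icc hT0
  have intb : IntervalIntegrable (fun t => (p (η t))^2) volume 0 T :=
    hbc.intervalIntegrable_of_Icc hT0
  have intinn : IntervalIntegrable (fun t => ⟪e t, η' t⟫) volume 0 T :=
    hinnc.intervalIntegrable_of_Icc hT0
  have intc : IntervalIntegrable (fun t => ‖e t‖ * ‖η' t‖) volume 0 T :=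
    (hec.norm.mul hη'.norm).intervalIntegrable_of_Icc hT0
  have intg : IntervalIntegrable (fun t => A (e t) (η t) - ⟪e t, η' t⟫) volume 0 T :=
    intaη.sub intinn
  -- FTC for F t = (1/2)⟪e,e⟫ − ⟪e,η⟫
  set F : ℝ → ℝ := fun t => (1/2) * ⟪e t, e t⟫ - ⟪e t, η t⟫ with hF
  set G : ℝ → ℝ := fun t =>
    (1/2) * (⟪e t, e' t⟫ + ⟪e' t, e t⟫) - (⟪e t, η' t⟫ + ⟪e' t, η t⟫) with hG
  have hGc : ContinuousOn G (Set.Icc 0 T) :=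
    (((hec.inner he').add (he'.inner hec)).const_smul (1/2:ℝ)).sub
      ((hec.inner hη').add (he'.inner hηc))
  have intG : IntervalIntegrable G volume 0 T := hGc.intervalIntegrable_of_Icc hT0
  have hFTC : ∫ t in (0:ℝ)..T, G t = F T - F 0 := by
    apply intervalIntegral.integral_eq_sub_of_hasDerivAt
    · intro t ht
      rw [huIcc] at ht
      exact ((HasDerivAt.inner ℝ (he t ht) (he t ht)).const_mul (1/2:ℝ)).sub
        (HasDerivAt.inner ℝ (he t ht) (hη t ht))
    · exact intG
  -- rewrite the integrand of G using the Galerkin identity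
  have hGeq : Set.EqOn G
      (fun t => (A (e t) (η t) - ⟪e t, η' t⟫) - A (e t) (e t)) (Set.uIcc 0 T) := by
    intro t ht
    rw [huIcc] at ht
    have h1 := hgal t ht
    have h2 : ⟪e t, e' t⟫ = ⟪e' t, e t⟫ := real_inner_comm _ _
    simp only [hG]
    linarith
  have hGint : ∫ t in (0:ℝ)..T, G t
      = (∫ t in (0:ℝ)..T, (A (e t) (η t) - ⟪e t, η' t⟫)) - ∫ t in (0:ℝ)..T, A (e t) (e t) := by
    rw [intervalIntegral.integral_congr hGeq, intervalIntegral.integral_sub intg inta]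
  set Ia := ∫ t in (0:ℝ)..T, A (e t) (e t) with hIa
  set Ig := ∫ t in (0:ℝ)..T, (A (e t) (η t) - ⟪e t, η' t⟫) with hIg
  set Ib := ∫ t in (0:ℝ)..T, (p (η t))^2 with hIb
  set Ic := ∫ t in (0:ℝ)..T, ‖e t‖ * ‖η' t‖ with hIc
  have key : F T - F 0 = Ig - Ia := by rw [← hFTC, hGint]
  -- pointwise bound on the integrand of Ig
  have hpt : ∀ t ∈ Set.Icc (0:ℝ) T,
      A (e t) (η t) - ⟪e t, η' t⟫ ≤
        (1/2) * A (e t) (e t) + C^2/2 * (p (η t))^2 + ‖e t‖ * ‖η' t‖ := by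
    intro t ht
    have h1 : A (e t) (η t) ≤ C * Real.sqrt (A (e t) (e t)) * p (η t) :=
      (le_abs_self _).trans (hcont _ _)
    have hs : Real.sqrt (A (e t) (e t)) ^ 2 = A (e t) (e t) := Real.sq_sqrt (hA _)
    have h2 : C * Real.sqrt (A (e t) (e t)) * p (η t) ≤
        (1/2) * A (e t) (e t) + C^2/2 * (p (η t))^2 := by
      nlinarith [sq_nonneg (Real.sqrt (A (e t) (e t)) - C * p (η t))]
    have h3 : -⟪e t, η' t⟫ ≤ ‖e t‖ * ‖η' t‖ := by
      have ha := abs_real_inner_le_norm (e t) (η' t)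
      have hb := neg_abs_le ⟪e t, η' t⟫
      linarith
    linarith
  have hRHSint : IntervalIntegrable
      (fun t => (1/2) * A (e t) (e t) + C^2/2 * (p (η t))^2 + ‖e t‖ * ‖η' t‖) volume 0 T :=
    ((inta.const_mul _).add (intb.const_mul _)).add intc
  have hIg_le : Ig ≤ (1/2) * Ia + C^2/2 * Ib + Ic := by
    have hmono := intervalIntegral.integral_mono_on hT0 intg hRHSint hpt
    have hsplit : ∫ t in (0:ℝ)..T,
        ((1/2) * A (e t) (e t) + C^2/2 * (p (η t))^2 + ‖e t‖ * ‖η' t‖)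
        = (1/2) * Ia + C^2/2 * Ib + Ic := by
      rw [intervalIntegral.integral_add ((inta.const_mul _).add (intb.const_mul _)) intc,
        intervalIntegral.integral_add (inta.const_mul _) (intb.const_mul _),
        intervalIntegral.integral_const_mul, intervalIntegral.integral_const_mul]
    rw [hsplit] at hmono
    exact hmono
  -- Cauchy–Schwarz for Ic
  have hIc_le : Ic ≤ Real.sqrt (∫ t in (0:ℝ)..T, ‖η' t‖ ^ 2) *
      Real.sqrt (∫ t in (0:ℝ)..T, ‖e t‖ ^ 2) := by
    have := cs_integral hT0 hη'.norm hec.norm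
    calc Ic = ∫ t in (0:ℝ)..T, ‖η' t‖ * ‖e t‖ := by
          simp only [hIc]
          congr 1
          funext t
          ring
      _ ≤ _ := this
  -- boundary Young inequalities
  have hbT : ⟪e T, η T⟫ ≤ (1/4) * ‖e T‖^2 + ‖η T‖^2 := by
    nlinarith [real_inner_le_norm (e T) (η T), sq_nonneg (‖e T‖ - 2 * ‖η T‖)]
  have hb0 : -⟪e 0, η 0⟫ ≤ (1/2) * ‖e 0‖^2 + (1/2) * ‖η 0‖^2 := by
    nlinarith [abs_real_inner_le_norm (e 0) (η 0), neg_abs_le ⟪e 0, η 0⟫,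
      sq_nonneg (‖e 0‖ - ‖η 0‖)]
  -- positivity facts
  have hIann : 0 ≤ Ia := intervalIntegral.integral_nonneg hT0 (fun t _ => hA _)
  have hIbnn : 0 ≤ Ib := intervalIntegral.integral_nonneg hT0 (fun t _ => sq_nonneg _)
  have hC2 : 1 ≤ C^2 := by nlinarith
  -- rewrite F in terms of norms
  have hFT : F T = (1/2) * ‖e T‖^2 - ⟪e T, η T⟫ := by
    simp only [hF, real_inner_self_eq_norm_sq]
  have hF0 : F 0 = (1/2) * ‖e 0‖^2 - ⟪e 0, η 0⟫ := by
    simp only [hF, real_inner_self_eq_norm_sq]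
  rw [hFT, hF0] at key
  -- assemble everything
  have hsq1 : 0 ≤ ‖η T‖^2 := sq_nonneg _
  have hsq2 : 0 ≤ ‖η 0‖^2 := sq_nonneg _
  nlinarith [key, hIg_le, hIc_le, hbT, hb0, hIann, hIbnn,
    mul_nonneg (by linarith : (0:ℝ) ≤ C^2 - 1) hIbnn,
    mul_nonneg (by linarith : (0:ℝ) ≤ C^2 - 1) hsq1]

/-- Parabolic quasi-optimality inequality (equation (4.5) of the paper): the error
`e = u − u_ms` of a Galerkin approximation is controlled by the error against any
comparison curve `v` with `u_ms − v` in the multiscale subspace `W`. -/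
theorem parabolic_quasi_optimality {H : Type*} [NormedAddCommGroup H]
    [InnerProductSpace ℝ H] [CompleteSpace H]
    (A : H →L[ℝ] H →L[ℝ] ℝ) (hA : ∀ w : H, 0 ≤ A w w)
    (p : Seminorm ℝ H) (hp : Continuous fun x => p x)
    (C : ℝ) (hC : 1 ≤ C)
    (hcont : ∀ x y : H, |A x y| ≤ C * Real.sqrt (A x x) * p y)
    (W : Submodule ℝ H) (T : ℝ) (hT : 0 < T)
    (u ums v u' ums' v' : ℝ → H)
    (hu : ∀ t ∈ Set.Icc (0 : ℝ) T, HasDerivAt u (u' t) t)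
    (hums : ∀ t ∈ Set.Icc (0 : ℝ) T, HasDerivAt ums (ums' t) t)
    (hv : ∀ t ∈ Set.Icc (0 : ℝ) T, HasDerivAt v (v' t) t)
    (hu' : ContinuousOn u' (Set.Icc (0 : ℝ) T))
    (hums' : ContinuousOn ums' (Set.Icc (0 : ℝ) T))
    (hv' : ContinuousOn v' (Set.Icc (0 : ℝ) T))
    (hgal : ∀ t ∈ Set.Icc (0 : ℝ) T, ∀ w ∈ W,
      ⟪u' t - ums' t, w⟫ + A (u t - ums t) w = 0)
    (hW : ∀ t ∈ Set.Icc (0 : ℝ) T, ums t - v t ∈ W) :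
    ‖u T - ums T‖ ^ 2 + ∫ t in (0 : ℝ)..T, A (u t - ums t) (u t - ums t) ≤
      4 * ‖u 0 - ums 0‖ ^ 2 + 4 * ‖u 0 - v 0‖ ^ 2 +
        4 * C ^ 2 * (‖u T - v T‖ ^ 2 + ∫ t in (0 : ℝ)..T, (p (u t - v t)) ^ 2) +
        4 * Real.sqrt (∫ t in (0 : ℝ)..T, ‖u' t - v' t‖ ^ 2) *
          Real.sqrt (∫ t in (0 : ℝ)..T, ‖u t - ums t‖ ^ 2) := by
  have hgal' : ∀ t ∈ Set.Icc (0:ℝ) T,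
      ⟪u' t - ums' t, u t - ums t⟫ + A (u t - ums t) (u t - ums t)
        = ⟪u' t - ums' t, u t - v t⟫ + A (u t - ums t) (u t - v t) := by
    intro t ht
    have h := hgal t ht (ums t - v t) (hW t ht)
    have h1 : ums t - v t = (u t - v t) - (u t - ums t) := by abel
    rw [h1, inner_sub_right, (A (u t - ums t)).map_sub] at h
    linarith
  exact parabolic_quasi_optimality_aux A hA p hp C hC hcont T hT
    (fun t => u t - ums t) (fun t => u t - v t)
    (fun t => u' t - ums' t) (fun t => u' t - v' t)
    (fun t ht => (hu t ht).sub (hums t ht))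
    (fun t ht => (hu t ht).sub (hv t ht))
    (hu'.sub hums') (hu'.sub hv') hgal'
end

section
/- Let H be a real Hilbert space with inner product ⟪·,·⟫ and norm ‖·‖, let T > 0, let Q : H → ℝ satisfy Q(v) ≥ 0 for all v ∈ H, and let ϑ, ρ : [0,T] → H be continuously differentiable curves such that for all t ∈ [0,T]: ⟪ρ'(t), ρ(t)⟫ + Q(ρ(t)) = −⟪ϑ'(t), ρ(t)⟫. Then ∫₀ᵀ ‖ϑ(t) + ρ(t)‖² dt ≤ 2 ∫₀ᵀ ‖ϑ(t)‖² dt + 4T ‖ρ(0)‖² + 2T² ∫₀ᵀ ‖ϑ'(t)‖² dt. -/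
open MeasureTheory
open scoped RealInnerProductSpace

/-- Elementary Cauchy–Schwarz for interval integrals of continuous functions. -/
lemma cs_interval {f : ℝ → ℝ} {t : ℝ} (ht : 0 ≤ t)
    (hf : ContinuousOn f (Set.Icc 0 t)) :
    (∫ s in (0:ℝ)..t, f s) ^ 2 ≤ t * ∫ s in (0:ℝ)..t, f s ^ 2 := by
  rcases eq_or_lt_of_le ht with h | h
  · simp [← h]
  · have hu : Set.uIcc (0:ℝ) t = Set.Icc 0 t := Set.uIcc_of_le ht
    have hfi : IntervalIntegrable f volume 0 t :=
      (hu ▸ hf : ContinuousOn f (Set.uIcc 0 t)).intervalIntegrable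
    have hfi2 : IntervalIntegrable (fun s => f s ^ 2) volume 0 t :=
      ((hu ▸ hf : ContinuousOn f (Set.uIcc 0 t)).pow 2).intervalIntegrable
    set I : ℝ := ∫ s in (0:ℝ)..t, f s with hI
    have h0 : 0 ≤ ∫ s in (0:ℝ)..t, (t * f s - I) ^ 2 :=
      intervalIntegral.integral_nonneg ht (fun s _ => sq_nonneg _)
    have hexp : (∫ s in (0:ℝ)..t, (t * f s - I) ^ 2)
        = t ^ 2 * (∫ s in (0:ℝ)..t, f s ^ 2) - t * I ^ 2 := by
      have hcongr : ∀ s : ℝ, (t * f s - I) ^ 2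
          = t ^ 2 * f s ^ 2 - 2 * t * I * f s + I ^ 2 := by
        intro s; ring
      rw [intervalIntegral.integral_congr (fun s _ => hcongr s)]
      rw [intervalIntegral.integral_add ((hfi2.const_mul _).sub (hfi.const_mul _))
        intervalIntegrable_const,
        intervalIntegral.integral_sub (hfi2.const_mul _) (hfi.const_mul _),
        intervalIntegral.integral_const_mul, intervalIntegral.integral_const_mul,
        intervalIntegral.integral_const, ← hI]
      simp only [smul_eq_mul, sub_zero]
      ring
    rw [hexp] at h0
    nlinarith [h0, h]

/-- Abstract content of Lemma 4.8: if
`⟪ρ'(t), ρ(t)⟫ + Q(ρ(t)) = −⟪ϑ'(t), ρ(t)⟫` with `Q ≥ 0`, then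
`∫₀ᵀ ‖ϑ + ρ‖² ≤ 2 ∫₀ᵀ ‖ϑ‖² + 4T ‖ρ(0)‖² + 2T² ∫₀ᵀ ‖ϑ'‖²`. -/
theorem l2_in_time_error_bound {H : Type*} [NormedAddCommGroup H]
    [InnerProductSpace ℝ H] [CompleteSpace H]
    (T : ℝ) (hT : 0 < T) (Q : H → ℝ) (hQ : ∀ v : H, 0 ≤ Q v)
    (ϑ ϑ' ρ ρ' : ℝ → H)
    (hϑderiv : ∀ t ∈ Set.Icc (0 : ℝ) T, HasDerivAt ϑ (ϑ' t) t)
    (hϑcont : ContinuousOn ϑ' (Set.Icc (0 : ℝ) T))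
    (hρderiv : ∀ t ∈ Set.Icc (0 : ℝ) T, HasDerivAt ρ (ρ' t) t)
    (hρcont : ContinuousOn ρ' (Set.Icc (0 : ℝ) T))
    (heq : ∀ t ∈ Set.Icc (0 : ℝ) T, ⟪ρ' t, ρ t⟫ + Q (ρ t) = -⟪ϑ' t, ρ t⟫) :
    ∫ t in (0 : ℝ)..T, ‖ϑ t + ρ t‖ ^ 2 ≤
      2 * (∫ t in (0 : ℝ)..T, ‖ϑ t‖ ^ 2) + 4 * T * ‖ρ 0‖ ^ 2 +
        2 * T ^ 2 * ∫ t in (0 : ℝ)..T, ‖ϑ' t‖ ^ 2 := by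
  have hTle : (0:ℝ) ≤ T := hT.le
  have huIcc : Set.uIcc (0:ℝ) T = Set.Icc 0 T := Set.uIcc_of_le hTle
  have h0mem : (0:ℝ) ∈ Set.Icc (0:ℝ) T := ⟨le_rfl, hTle⟩
  -- continuity of ρ and ϑ on the interval
  have hρc : ContinuousOn ρ (Set.Icc 0 T) := fun t ht =>
    (hρderiv t ht).continuousAt.continuousWithinAt
  have hϑc : ContinuousOn ϑ (Set.Icc 0 T) := fun t ht =>
    (hϑderiv t ht).continuousAt.continuousWithinAt
  have hnϑ'c : ContinuousOn (fun s => ‖ϑ' s‖) (Set.Icc 0 T) := hϑcont.norm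
  have hintn2 : IntervalIntegrable (fun s => ‖ϑ' s‖ ^ 2) volume 0 T :=
    ((huIcc ▸ hnϑ'c : ContinuousOn _ (Set.uIcc 0 T)).pow 2).intervalIntegrable
  -- Step A: pointwise Grönwall bound
  have key : ∀ t ∈ Set.Icc (0:ℝ) T,
      ‖ρ t‖ ≤ ‖ρ 0‖ + ∫ s in (0:ℝ)..t, ‖ϑ' s‖ := by
    intro t ht
    refine le_of_forall_pos_le_add ?_
    intro ε hε
    set ψ : ℝ → ℝ := fun s => Real.sqrt (‖ρ s‖ ^ 2 + ε ^ 2) with hψdef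
    set g : ℝ → ℝ := fun s => ψ s - ∫ u in (0:ℝ)..s, ‖ϑ' u‖ with hgdef
    have hψpos : ∀ s, 0 < ‖ρ s‖ ^ 2 + ε ^ 2 := fun s =>
      add_pos_of_nonneg_of_pos (sq_nonneg _) (pow_pos hε 2)
    have hψspos : ∀ s, 0 < ψ s := fun s => Real.sqrt_pos.2 (hψpos s)
    have hρψ : ∀ s, ‖ρ s‖ ≤ ψ s := by
      intro s
      have h1 : ‖ρ s‖ = Real.sqrt (‖ρ s‖ ^ 2) := (Real.sqrt_sq (norm_nonneg _)).symm
      rw [h1]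
      exact Real.sqrt_le_sqrt (by nlinarith [sq_nonneg ε])
    -- g is antitone on [0,T]
    have hganti : AntitoneOn g (Set.Icc 0 T) := by
      have hprim : ContinuousOn (fun s => ∫ u in (0:ℝ)..s, ‖ϑ' u‖) (Set.Icc 0 T) := by
        have := intervalIntegral.continuousOn_primitive_interval
          (μ := volume) (f := fun s => ‖ϑ' s‖) (a := 0) (b := T)
          (by rw [huIcc]; exact hnϑ'c.integrableOn_compact isCompact_Icc)
        rwa [huIcc] at this
      have hψcont : ContinuousOn ψ (Set.Icc 0 T) :=
        Real.continuous_sqrt.comp_continuousOn ((hρc.norm.pow 2).add continuousOn_const)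
      have hgcont : ContinuousOn g (Set.Icc 0 T) := hψcont.sub hprim
      -- derivative at interior points
      have hder : ∀ x ∈ Set.Ioo (0:ℝ) T,
          HasDerivAt g ((2 * ⟪ρ' x, ρ x⟫) / (2 * ψ x) - ‖ϑ' x‖) x := by
        intro x hx
        have hx' : x ∈ Set.Icc (0:ℝ) T := Set.Ioo_subset_Icc_self hx
        have h1 : HasDerivAt (fun s => ‖ρ s‖ ^ 2 + ε ^ 2) (2 * ⟪ρ' x, ρ x⟫) x := by
          have h2 := ((hρderiv x hx').inner ℝ (hρderiv x hx')).add_const (ε ^ 2)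
          have heqf : (fun s => (⟪ρ s, ρ s⟫ : ℝ) + ε ^ 2)
              = fun s => ‖ρ s‖ ^ 2 + ε ^ 2 := by
            funext s; rw [real_inner_self_eq_norm_sq]
          rw [heqf] at h2
          refine h2.congr_deriv ?_
          rw [real_inner_comm (ρ x) (ρ' x)]
          ring
        have h2 : HasDerivAt ψ ((2 * ⟪ρ' x, ρ x⟫) / (2 * ψ x)) x := by
          have := h1.sqrt (ne_of_gt (hψpos x))
          exact this
        have h3 : HasDerivAt (fun s => ∫ u in (0:ℝ)..s, ‖ϑ' u‖) (‖ϑ' x‖) x := by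
          refine intervalIntegral.integral_hasDerivAt_right ?_ ?_ ?_
          · exact (by
              rw [Set.uIcc_of_le hx'.1]
              exact hnϑ'c.mono (Set.Icc_subset_Icc le_rfl hx'.2) :
              ContinuousOn (fun s => ‖ϑ' s‖) (Set.uIcc 0 x)).intervalIntegrable
          · exact ContinuousOn.stronglyMeasurableAtFilter isOpen_Ioo
              (hnϑ'c.mono Set.Ioo_subset_Icc_self) x hx
          · exact (hnϑ'c x hx').continuousAt (Icc_mem_nhds hx.1 hx.2)
        exact h2.sub h3
      refine antitoneOn_of_deriv_nonpos (convex_Icc 0 T) hgcont ?_ ?_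
      · intro x hx
        rw [interior_Icc] at hx
        exact (hder x hx).differentiableAt.differentiableWithinAt
      · intro x hx
        rw [interior_Icc] at hx
        rw [(hder x hx).deriv]
        have hx' : x ∈ Set.Icc (0:ℝ) T := Set.Ioo_subset_Icc_self hx
        have hinner : ⟪ρ' x, ρ x⟫ ≤ ‖ϑ' x‖ * ‖ρ x‖ := by
          have h4 := heq x hx'
          have h5 : |⟪ϑ' x, ρ x⟫| ≤ ‖ϑ' x‖ * ‖ρ x‖ := abs_real_inner_le_norm _ _
          have h6 : -⟪ϑ' x, ρ x⟫ ≤ |⟪ϑ' x, ρ x⟫| := neg_le_abs _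
          have h7 := hQ (ρ x)
          linarith
        rw [sub_nonpos, div_le_iff₀ (by positivity)]
        nlinarith [hinner, hρψ x, norm_nonneg (ϑ' x), hψspos x]
    -- conclude the pointwise bound
    have hgt : g t ≤ g 0 := hganti h0mem ht ht.1
    have hsqrt0 : ψ 0 ≤ ‖ρ 0‖ + ε := by
      have h1 : ψ 0 ≤ Real.sqrt ((‖ρ 0‖ + ε) ^ 2) :=
        Real.sqrt_le_sqrt (by nlinarith [norm_nonneg (ρ 0), hε.le])
      rwa [Real.sqrt_sq (by positivity)] at h1
    have := hρψ t
    simp only [hgdef, intervalIntegral.integral_same, sub_zero] at hgt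
    linarith
  -- Step B: integrate the pointwise bound
  set C : ℝ := ∫ s in (0:ℝ)..T, ‖ϑ' s‖ ^ 2 with hC
  have hC0 : 0 ≤ C := intervalIntegral.integral_nonneg hTle (fun s _ => sq_nonneg _)
  have hsq : ∀ t ∈ Set.Icc (0:ℝ) T,
      ‖ϑ t + ρ t‖ ^ 2 ≤ 2 * ‖ϑ t‖ ^ 2 + 4 * ‖ρ 0‖ ^ 2 + 4 * C * t := by
    intro t ht
    have h1 := key t ht
    set I : ℝ := ∫ s in (0:ℝ)..t, ‖ϑ' s‖ with hIdef
    have hI0 : 0 ≤ I := intervalIntegral.integral_nonneg ht.1 (fun s _ => norm_nonneg _)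
    have hIt2 : I ^ 2 ≤ t * ∫ s in (0:ℝ)..t, ‖ϑ' s‖ ^ 2 :=
      cs_interval ht.1 (hnϑ'c.mono (Set.Icc_subset_Icc le_rfl ht.2))
    have hmono : (∫ s in (0:ℝ)..t, ‖ϑ' s‖ ^ 2) ≤ C :=
      intervalIntegral.integral_mono_interval le_rfl ht.1 ht.2
        (ae_of_all _ (fun s => sq_nonneg _)) hintn2
    have htri : ‖ϑ t + ρ t‖ ≤ ‖ϑ t‖ + ‖ρ t‖ := norm_add_le _ _
    nlinarith [norm_nonneg (ϑ t + ρ t), norm_nonneg (ϑ t), norm_nonneg (ρ t),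
      norm_nonneg (ρ 0), ht.1, sq_nonneg (‖ϑ t‖ - ‖ρ t‖), sq_nonneg (‖ρ 0‖ - I),
      mul_le_mul_of_nonneg_left hmono ht.1]
  -- integrability of both sides
  have hintL : IntervalIntegrable (fun t => ‖ϑ t + ρ t‖ ^ 2) volume 0 T := by
    apply ContinuousOn.intervalIntegrable
    rw [huIcc]
    exact ((hϑc.add hρc).norm.pow 2)
  have hintϑ2 : IntervalIntegrable (fun t => ‖ϑ t‖ ^ 2) volume 0 T := by
    apply ContinuousOn.intervalIntegrable
    rw [huIcc]
    exact hϑc.norm.pow 2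
  have hlin : IntervalIntegrable (fun t : ℝ => 4 * C * t) volume 0 T := by
    apply Continuous.intervalIntegrable
    continuity
  have hintR : IntervalIntegrable
      (fun t => 2 * ‖ϑ t‖ ^ 2 + 4 * ‖ρ 0‖ ^ 2 + 4 * C * t) volume 0 T := by
    apply IntervalIntegrable.add
    · exact (hintϑ2.const_mul 2).add intervalIntegrable_const
    · exact hlin
  have hmain : (∫ t in (0:ℝ)..T, ‖ϑ t + ρ t‖ ^ 2)
      ≤ ∫ t in (0:ℝ)..T, (2 * ‖ϑ t‖ ^ 2 + 4 * ‖ρ 0‖ ^ 2 + 4 * C * t) :=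
    intervalIntegral.integral_mono_on hTle hintL hintR hsq
  have hRHS : (∫ t in (0:ℝ)..T, (2 * ‖ϑ t‖ ^ 2 + 4 * ‖ρ 0‖ ^ 2 + 4 * C * t))
      = 2 * (∫ t in (0:ℝ)..T, ‖ϑ t‖ ^ 2) + 4 * ‖ρ 0‖ ^ 2 * T + 4 * C * (T ^ 2 / 2) := by
    rw [intervalIntegral.integral_add ((hintϑ2.const_mul 2).add intervalIntegrable_const)
      hlin,
      intervalIntegral.integral_add (hintϑ2.const_mul 2) intervalIntegrable_const,
      intervalIntegral.integral_const_mul, intervalIntegral.integral_const,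
      intervalIntegral.integral_const_mul, integral_id]
    simp only [smul_eq_mul, sub_zero]
    ring
  rw [hRHS] at hmain
  nlinarith [hmain]
end
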